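/- Let d ≥ 1, let 0 ≤ m ≤ d, let ρ be any bijection of {0,1}^d, and let G be the pair of d-dimensional butterflies with gluing bijection ρ. Then for every set A of input nodes of G and every set B of output nodes of G with |A| = |B| = 2^m, there exists a node-disjoint routing from A to B; that is, every pair of d-dimensional butterflies is a 2^m-concentrator. -/

import Mathlib

/-- Edge relation of a pair of `d`-dimensional standard butterflies glued by the
bijection `ρ` of `{0,1}^d`: the layer-`d` vertex labelled `b` of the left butterfly
(layers `0,…,d`) is identified with the layer-`d` input vertex labelled `ρ b` of the
right butterfly (layers `d,…,2d`).  Labels of vertices on layers `0,…,d` are left-labels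
and labels on layers `d+1,…,2d` are right-labels.  `pairStep d ρ i b b'` says there is a
directed edge from the vertex with label `b` on layer `i` to the vertex with label `b'`
on layer `i+1`: crossing the `(i+1)`-st layer of edges of a standard butterfly may change
exactly coordinate `i+1` (`0`-based: coordinate `i`), and at the glue layer `i = d` the
left label `b` is first translated to the right label `ρ b`. -/
def pairStep (d : ℕ) (ρ : (Fin d → Bool) ≃ (Fin d → Bool)) (i : ℕ)
    (b b' : Fin d → Bool) : Prop :=
  if h : i < d then
    ∀ k : Fin d, k ≠ ⟨i, h⟩ → b k = b' k
  else if h' : i < 2 * d then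
    ∀ k : Fin d, k ≠ (⟨i - d, by omega⟩ : Fin d) →
      (if i = d then ρ b else b) k = b' k
  else False



open Finset

namespace PBaux

lemma sum_range_two_pow (n : ℕ) : ∑ x ∈ Finset.range n, 2^x = 2^n - 1 := by
  induction n with
  | zero => simp
  | succ n ih =>
    rw [Finset.sum_range_succ, ih]
    have : (1:ℕ) ≤ 2^n := Nat.one_le_two_pow
    rw [pow_succ]; omega

variable {d : ℕ}

/-- LSB-first binary key of a label. -/
def key (c : Fin d → Bool) : ℕ := ∑ j, if c j then 2^(j:ℕ) else 0

lemma key_eq_equiv (c : Fin d → Bool) :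
    key c = (finFunctionFinEquiv (fun j => if c j then (1 : Fin 2) else 0) : ℕ) := by
  rw [finFunctionFinEquiv_apply]
  unfold key
  refine Finset.sum_congr rfl fun j _ => ?_
  by_cases h : c j <;> simp [h]

lemma key_inj : Function.Injective (key (d := d)) := by
  intro c c' h
  rw [key_eq_equiv, key_eq_equiv] at h
  have h2 := finFunctionFinEquiv.injective (Fin.val_injective h)
  funext j
  have := congrFun h2 j
  by_cases hc : c j <;> by_cases hc' : c' j <;> simp [hc, hc'] at this ⊢

lemma key_lt (c : Fin d → Bool) : key c < 2^d := by
  rw [key_eq_equiv]; exact (finFunctionFinEquiv _).isLt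

lemma key_low_lt (c : Fin d → Bool) (i : ℕ) :
    (∑ j ∈ univ.filter (fun j : Fin d => (j:ℕ) < i), if c j then 2^(j:ℕ) else 0) < 2^i := by
  have h1 : (∑ j ∈ univ.filter (fun j : Fin d => (j:ℕ) < i), if c j then 2^(j:ℕ) else 0)
      ≤ ∑ j ∈ univ.filter (fun j : Fin d => (j:ℕ) < i), 2^(j:ℕ) := by
    refine Finset.sum_le_sum fun j _ => ?_
    split <;> simp
  have h2 : (∑ j ∈ univ.filter (fun j : Fin d => (j:ℕ) < i), 2^(j:ℕ))
      = ∑ n ∈ (univ.filter (fun j : Fin d => (j:ℕ) < i)).image (Fin.val), 2^n := by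
    rw [Finset.sum_image (by intro x _ y _ h; exact Fin.val_injective h)]
  have h3 : (univ.filter (fun j : Fin d => (j:ℕ) < i)).image (Fin.val) ⊆ Finset.range i := by
    intro n hn
    simp only [Finset.mem_image, Finset.mem_filter] at hn
    obtain ⟨j, ⟨_, hj⟩, rfl⟩ := hn
    exact Finset.mem_range.2 hj
  have h4 : (∑ n ∈ (univ.filter (fun j : Fin d => (j:ℕ) < i)).image (Fin.val), 2^n)
      ≤ ∑ n ∈ Finset.range i, 2^n :=
    Finset.sum_le_sum_of_subset h3
  have h5 := sum_range_two_pow i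
  have : (1:ℕ) ≤ 2^i := Nat.one_le_two_pow
  omega

/-- If two labels agree on coordinates `≥ i`, their keys are within `2^i`. -/
lemma key_close {c c' : Fin d → Bool} {i : ℕ}
    (h : ∀ j : Fin d, i ≤ (j:ℕ) → c j = c' j) :
    key c < key c' + 2^i ∧ key c' < key c + 2^i := by
  have split : ∀ x : Fin d → Bool, key x =
      (∑ j ∈ univ.filter (fun j : Fin d => (j:ℕ) < i), if x j then 2^(j:ℕ) else 0) +
      (∑ j ∈ univ.filter (fun j : Fin d => ¬ (j:ℕ) < i), if x j then 2^(j:ℕ) else 0) := by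
    intro x; rw [Finset.sum_filter_add_sum_filter_not]; rfl
  have hhigh : (∑ j ∈ univ.filter (fun j : Fin d => ¬ (j:ℕ) < i), if c j then 2^(j:ℕ) else 0)
      = ∑ j ∈ univ.filter (fun j : Fin d => ¬ (j:ℕ) < i), if c' j then 2^(j:ℕ) else 0 := by
    refine Finset.sum_congr rfl fun j hj => ?_
    simp only [Finset.mem_filter] at hj
    rw [h j (by omega)]
  have l1 := key_low_lt c i
  have l2 := key_low_lt c' i
  rw [split c, split c', hhigh]
  omega

/-- If two labels agree on coordinates `< i`, their keys agree mod `2^i`. -/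
lemma key_mod {c c' : Fin d → Bool} {i : ℕ}
    (h : ∀ j : Fin d, (j:ℕ) < i → c j = c' j) :
    key c % 2^i = key c' % 2^i := by
  have split : ∀ x : Fin d → Bool, key x =
      (∑ j ∈ univ.filter (fun j : Fin d => (j:ℕ) < i), if x j then 2^(j:ℕ) else 0) +
      (∑ j ∈ univ.filter (fun j : Fin d => ¬ (j:ℕ) < i), if x j then 2^(j:ℕ) else 0) := by
    intro x; rw [Finset.sum_filter_add_sum_filter_not]; rfl
  have hlow : (∑ j ∈ univ.filter (fun j : Fin d => (j:ℕ) < i), if c j then 2^(j:ℕ) else 0)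
      = ∑ j ∈ univ.filter (fun j : Fin d => (j:ℕ) < i), if c' j then 2^(j:ℕ) else 0 := by
    refine Finset.sum_congr rfl fun j hj => ?_
    simp only [Finset.mem_filter] at hj
    rw [h j hj.2]
  have hdvd : ∀ x : Fin d → Bool,
      2^i ∣ ∑ j ∈ univ.filter (fun j : Fin d => ¬ (j:ℕ) < i), if x j then 2^(j:ℕ) else 0 := by
    intro x
    refine Finset.dvd_sum fun j hj => ?_
    simp only [Finset.mem_filter] at hj
    have : 2^i ∣ 2^(j:ℕ) := pow_dvd_pow 2 (by omega)
    split <;> simp [this]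
  obtain ⟨k, hk⟩ := hdvd c
  obtain ⟨k', hk'⟩ := hdvd c'
  rw [split c, split c', hlow, hk, hk', Nat.add_mul_mod_self_left, Nat.add_mul_mod_self_left]

/-- two numbers within distance `< n` of each other with equal residues mod `n` are equal -/
lemma eq_of_close_of_mod_eq {x y n : ℕ} (hn : 0 < n) (h1 : x < y + n) (h2 : y < x + n)
    (h : x % n = y % n) : x = y := by
  have ex : x = n * (x / n) + x % n := (Nat.div_add_mod x n).symm
  have ey : y = n * (y / n) + y % n := (Nat.div_add_mod y n).symm
  have hq : x / n = y / n := by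
    have b1 : n * (x / n) < n * (y / n + 1) := by
      rw [Nat.mul_add, Nat.mul_one]; omega
    have b2 : n * (y / n) < n * (x / n + 1) := by
      rw [Nat.mul_add, Nat.mul_one]; omega
    have := (Nat.mul_lt_mul_left hn).1 b1
    have := (Nat.mul_lt_mul_left hn).1 b2
    omega
  rw [hq, h] at ex
  omega

lemma mod_two_pow_eq_of_testBit {x y i : ℕ} (h : ∀ j < i, x.testBit j = y.testBit j) :
    x % 2^i = y % 2^i := by
  refine Nat.eq_of_testBit_eq fun j => ?_
  rw [Nat.testBit_mod_two_pow, Nat.testBit_mod_two_pow]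
  by_cases hj : j < i
  · simp [hj, h j hj]
  · simp [hj]

lemma eq_of_testBit_lt {x y m : ℕ} (hx : x < 2^m) (hy : y < 2^m)
    (h : ∀ j < m, x.testBit j = y.testBit j) : x = y := by
  refine Nat.eq_of_testBit_eq fun j => ?_
  by_cases hj : j < m
  · exact h j hj
  · have : (2:ℕ)^m ≤ 2^j := Nat.pow_le_pow_right (by norm_num) (by omega)
    rw [Nat.testBit_lt_two_pow (by omega), Nat.testBit_lt_two_pow (by omega)]

end PBaux
open Finset
namespace PBaux2
set_option linter.unusedSectionVars false
set_option linter.unusedVariables false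
open PBaux

variable {α : Type*} [DecidableEq α] (S : Finset α) (kf : α → ℕ)

/-- rank of `a` in `S` sorted by `kf`. -/
def rk (a : α) : ℕ := (S.filter fun x => kf x < kf a).card

lemma rk_lt_card {a : α} (ha : a ∈ S) : rk S kf a < S.card := by
  unfold rk
  have hsub : (S.filter fun x => kf x < kf a) ⊆ S.erase a := by
    intro x hx
    simp only [Finset.mem_filter] at hx
    exact Finset.mem_erase.2 ⟨fun h => by subst h; omega, hx.1⟩
  have := Finset.card_le_card hsub
  have := Finset.card_erase_of_mem ha
  have : 0 < S.card := Finset.card_pos.2 ⟨a, ha⟩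
  omega

lemma rk_lt_of_lt {a a' : α} (ha : a ∈ S) (h : kf a < kf a') : rk S kf a < rk S kf a' := by
  have hsub : (S.filter fun x => kf x < kf a) ⊆ (S.filter fun x => kf x < kf a') := by
    intro x hx; simp only [Finset.mem_filter] at hx ⊢; exact ⟨hx.1, by omega⟩
  refine Finset.card_lt_card ?_
  rw [Finset.ssubset_iff_of_subset hsub]
  exact ⟨a, Finset.mem_filter.2 ⟨ha, h⟩, by simp⟩

lemma rk_block (hinj : Function.Injective kf) {a a' : α} (h : kf a < kf a') :
    rk S kf a' ≤ rk S kf a + (kf a' - kf a) := by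
  have hsub : (S.filter fun x => kf x < kf a') ⊆
      (S.filter fun x => kf x < kf a) ∪ (S.filter fun x => kf a ≤ kf x ∧ kf x < kf a') := by
    intro x hx
    simp only [Finset.mem_filter, Finset.mem_union] at hx ⊢
    rcases lt_or_ge (kf x) (kf a) with h1 | h1
    · exact Or.inl ⟨hx.1, h1⟩
    · exact Or.inr ⟨hx.1, h1, hx.2⟩
  have hmid : (S.filter fun x => kf a ≤ kf x ∧ kf x < kf a').card ≤ kf a' - kf a := by
    have : (S.filter fun x => kf a ≤ kf x ∧ kf x < kf a').card ≤ (Finset.Ico (kf a) (kf a')).card := by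
      refine Finset.card_le_card_of_injOn kf ?_ ?_
      · intro x hx; simp only [Finset.mem_coe, Finset.mem_filter] at hx; exact Finset.mem_Ico.2 hx.2
      · intro x _ y _ hxy; exact hinj hxy
    rwa [Nat.card_Ico] at this
  calc rk S kf a' ≤ ((S.filter fun x => kf x < kf a) ∪ (S.filter fun x => kf a ≤ kf x ∧ kf x < kf a')).card :=
        Finset.card_le_card hsub
    _ ≤ rk S kf a + (S.filter fun x => kf a ≤ kf x ∧ kf x < kf a').card := Finset.card_union_le _ _
    _ ≤ rk S kf a + (kf a' - kf a) := by omega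

/-- combined: distinct elements of `S` whose keys are within `2^i` have ranks that
differ mod `2^i`. -/
lemma rk_mod_ne (hinj : Function.Injective kf) {a a' : α} (ha : a ∈ S) (ha' : a' ∈ S)
    (hne : a ≠ a') {n : ℕ} (hn : 0 < n)
    (hc1 : kf a < kf a' + n) (hc2 : kf a' < kf a + n) :
    rk S kf a % n ≠ rk S kf a' % n := by
  intro hmod
  have hkne : kf a ≠ kf a' := fun h => hne (hinj h)
  rcases lt_or_gt_of_ne hkne with h | h
  · have h1 := rk_lt_of_lt S kf ha h
    have h2 := rk_block S kf hinj h
    have := PBaux.eq_of_close_of_mod_eq hn (by omega) (by omega) hmod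
    omega
  · have h1 := rk_lt_of_lt S kf ha' h
    have h2 := rk_block S kf hinj h
    have := PBaux.eq_of_close_of_mod_eq hn (by omega) (by omega) hmod
    omega

lemma rk_inj_on (hinj : Function.Injective kf) {a a' : α} (ha : a ∈ S) (ha' : a' ∈ S)
    (hne : a ≠ a') : rk S kf a ≠ rk S kf a' := by
  have hkne : kf a ≠ kf a' := fun h => hne (hinj h)
  rcases lt_or_gt_of_ne hkne with h | h
  · exact Nat.ne_of_lt (rk_lt_of_lt S kf ha h)
  · exact Nat.ne_of_gt (rk_lt_of_lt S kf ha' h)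

lemma rk_surj (hinj : Function.Injective kf) {t : ℕ} (ht : t < S.card) :
    ∃ b ∈ S, rk S kf b = t := by
  classical
  have hio : Set.InjOn (rk S kf) ↑S := by
    intro x hx y hy hxy
    by_contra hne
    exact rk_inj_on S kf hinj hx hy hne hxy
  have hcard : (S.image (rk S kf)).card = S.card := Finset.card_image_of_injOn hio
  have hsub : S.image (rk S kf) ⊆ Finset.range S.card := by
    intro n hn
    obtain ⟨b, hb, rfl⟩ := Finset.mem_image.1 hn
    exact Finset.mem_range.2 (rk_lt_card S kf hb)
  have heq : S.image (rk S kf) = Finset.range S.card :=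
    Finset.eq_of_subset_of_card_le hsub (by rw [hcard, Finset.card_range])
  have : t ∈ S.image (rk S kf) := by rw [heq]; exact Finset.mem_range.2 ht
  obtain ⟨b, hb, hbt⟩ := Finset.mem_image.1 this
  exact ⟨b, hb, hbt⟩

end PBaux2
open Finset
namespace PBaux3
set_option linter.unusedSectionVars false

variable {d : ℕ}

/-- number of labels with prescribed values on the coordinates satisfying `p` -/
lemma card_pattern (p : Fin d → Prop) [DecidablePred p] (v : Fin d → Bool) :
    (univ.filter fun c : Fin d → Bool => ∀ j, p j → c j = v j).card
      = 2 ^ (Fintype.card {j : Fin d // ¬ p j}) := by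
  classical
  have h := Finset.card_bij'
    (i := fun (c : Fin d → Bool) (_ : c ∈ univ.filter fun c => ∀ j, p j → c j = v j) =>
      (fun j : {j : Fin d // ¬ p j} => c j.1))
    (j := fun (g : {j : Fin d // ¬ p j} → Bool) (_ : g ∈ univ) =>
      (fun j : Fin d => if h : p j then v j else g ⟨j, h⟩))
    (hi := fun c hc => Finset.mem_univ _)
    (hj := ?_) ?_ ?_
  · rw [h]
    rw [Finset.card_univ, Fintype.card_fun, Fintype.card_bool]
  · intro g _
    simp only [Finset.mem_filter, Finset.mem_univ, true_and]
    intro j hj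
    rw [dif_pos hj]
  · intro c hc
    simp only [Finset.mem_filter, Finset.mem_univ, true_and] at hc
    funext j
    by_cases hj : p j
    · simp only [hj, dite_true, dif_pos]
      exact (hc j hj).symm
    · simp only [hj, dite_false, dif_neg, not_false_iff]
  · intro g _
    funext j
    simp only [j.2, dif_neg, not_false_iff]

lemma card_subtype_lt {t : ℕ} (ht : t ≤ d) :
    Fintype.card {j : Fin d // (j:ℕ) < t} = t := by
  have e : {j : Fin d // (j:ℕ) < t} ≃ Fin t :=
    { toFun := fun j => ⟨(j.1 : ℕ), j.2⟩
      invFun := fun k => ⟨⟨(k : ℕ), lt_of_lt_of_le k.2 ht⟩, k.2⟩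
      left_inv := fun j => by ext; rfl
      right_inv := fun k => by ext; rfl }
  rw [Fintype.card_congr e, Fintype.card_fin]

lemma card_subtype_not_lt {t : ℕ} (ht : t ≤ d) :
    Fintype.card {j : Fin d // ¬ (j:ℕ) < t} = d - t := by
  rw [Fintype.card_subtype_compl, card_subtype_lt ht, Fintype.card_fin]

end PBaux3
open Finset
namespace PBmain
open PBaux PBaux2 PBaux3
set_option linter.unusedSectionVars false
set_option linter.unusedVariables false

variable {d m : ℕ}

/-- MSB-first key. -/
def key2 {n : ℕ} (b : Fin n → Bool) : ℕ := key (fun j => b (Fin.rev j))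

lemma key2_inj {n : ℕ} : Function.Injective (key2 (n := n)) := by
  intro b b' h
  have h2 := key_inj h
  funext j
  have := congrFun h2 (Fin.rev j)
  simpa [Fin.rev_rev] using this

lemma key2_lt {n : ℕ} (b : Fin n → Bool) : key2 b < 2^n := key_lt _

/-- agreement on low coordinates `< i` gives close MSB-keys (within `2^(n-i)`). -/
lemma key2_close {n : ℕ} {b b' : Fin n → Bool} {i : ℕ} (hi : i ≤ n)
    (h : ∀ j : Fin n, (j:ℕ) < i → b j = b' j) :
    key2 b < key2 b' + 2^(n-i) ∧ key2 b' < key2 b + 2^(n-i) := by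
  refine key_close (fun j hj => ?_)
  refine h (Fin.rev j) ?_
  have := j.2
  simp only [Fin.val_rev]
  omega

/-- agreement on high coordinates `≥ i` gives equal MSB-keys mod `2^(n-i)`. -/
lemma key2_mod {n : ℕ} {b b' : Fin n → Bool} {i : ℕ}
    (h : ∀ j : Fin n, i ≤ (j:ℕ) → b j = b' j) :
    key2 b % 2^(n-i) = key2 b' % 2^(n-i) := by
  refine key_mod (fun j hj => ?_)
  refine h (Fin.rev j) ?_
  have := j.2
  simp only [Fin.val_rev]
  omega

variable (d m)

/-- the rank of `a` in `A`, LSB-first order. -/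
def rA (A : Finset (Fin d → Bool)) (a : Fin d → Bool) : ℕ := rk A key a

/-- middle-node candidates for `a`: low `m` coordinates encode the rank of `a`. -/
def Dset (A : Finset (Fin d → Bool)) (a : Fin d → Bool) : Finset (Fin d → Bool) :=
  univ.filter (fun c => ∀ j : Fin d, (j:ℕ) < m → c j = (rA d A a).testBit (j:ℕ))

/-- top `m` coordinates of a label. -/
def top (hm : m ≤ d) (y : Fin d → Bool) : Fin m → Bool :=
  fun k => y ⟨d - m + (k:ℕ), by have := k.2; omega⟩

/-- fiber of `top`. -/
def Fib (tt : Fin m → Bool) : Finset (Fin d → Bool) :=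
  univ.filter (fun y => ∀ j : Fin d, d - m ≤ (j:ℕ) →
    y j = (if h : (j:ℕ) - (d-m) < m then tt ⟨(j:ℕ) - (d-m), h⟩ else false))

variable {d m}

lemma card_Dset (hm : m ≤ d) (A : Finset (Fin d → Bool)) (a : Fin d → Bool) :
    (Dset d m A a).card = 2^(d-m) := by
  rw [Dset, card_pattern (fun j : Fin d => (j:ℕ) < m), card_subtype_not_lt hm]

lemma card_Fib (hm : m ≤ d) (tt : Fin m → Bool) :
    (Fib d m tt).card = 2^(d-m) := by
  rw [Fib, card_pattern (fun j : Fin d => d - m ≤ (j:ℕ))]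
  congr 1
  rw [Fintype.card_congr (Equiv.subtypeEquivRight (q := fun j : Fin d => (j:ℕ) < d - m)
    (fun j => by omega))]
  exact card_subtype_lt (by omega)

lemma mem_Fib_top (hm : m ≤ d) (y : Fin d → Bool) : y ∈ Fib d m (top d m hm y) := by
  rw [Fib, Finset.mem_filter]
  refine ⟨Finset.mem_univ _, fun j hj => ?_⟩
  have hjd := j.2
  have hlt : (j:ℕ) - (d-m) < m := by omega
  rw [dif_pos hlt]
  show y j = y ⟨d - m + ((j:ℕ) - (d-m)), _⟩
  congr 1
  exact Fin.ext (by simp; omega)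

lemma Dset_disj (hm : m ≤ d) {A : Finset (Fin d → Bool)} (hA : A.card = 2^m)
    {a a' : Fin d → Bool} (ha : a ∈ A) (ha' : a' ∈ A) (hne : a ≠ a') :
    Disjoint (Dset d m A a) (Dset d m A a') := by
  rw [Finset.disjoint_left]
  intro c hc hc'
  rw [Dset, Finset.mem_filter] at hc hc'
  have hbit : ∀ j < m, (rA d A a).testBit j = (rA d A a').testBit j := by
    intro j hj
    have h1 := hc.2 ⟨j, by omega⟩ hj
    have h2 := hc'.2 ⟨j, by omega⟩ hj
    simp only at h1 h2
    rw [← h1, h2]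
  have hlt : rA d A a < 2^m := by
    have := rk_lt_card A key ha; rwa [hA] at this
  have hlt' : rA d A a' < 2^m := by
    have := rk_lt_card A key ha'; rwa [hA] at this
  have : rA d A a = rA d A a' := eq_of_testBit_lt hlt hlt' hbit
  exact rk_inj_on A key key_inj ha ha' hne this

/-- Hall's condition and matching: choose for each `a ∈ A` a middle node in `Dset a`
such that the top `m` bits of the `ρ`-images are pairwise distinct. -/
lemma hall_exists (hm : m ≤ d) (ρ : (Fin d → Bool) ≃ (Fin d → Bool))
    {A : Finset (Fin d → Bool)} (hA : A.card = 2^m) :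
    ∃ f : {x // x ∈ A} → (Fin m → Bool), Function.Injective f ∧
      ∀ x : {x // x ∈ A}, f x ∈ (Dset d m A x.1).image (fun c => top d m hm (ρ c)) := by
  classical
  rw [← Finset.all_card_le_biUnion_card_iff_exists_injective]
  intro s
  have hpow : (0:ℕ) < 2^(d-m) := Nat.pow_pos (by norm_num)
  -- U = union of the Dsets
  have hUcard : (s.biUnion (fun x => Dset d m A x.1)).card = s.card * 2^(d-m) := by
    rw [Finset.card_biUnion]
    · rw [Finset.sum_congr rfl (fun x _ => card_Dset hm A x.1), Finset.sum_const,
        smul_eq_mul]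
    · intro x hx y hy hxy
      exact Dset_disj hm hA x.2 y.2 (fun h => hxy (Subtype.ext h))
  -- image under ρ
  have hVcard : ((s.biUnion (fun x => Dset d m A x.1)).image ρ).card = s.card * 2^(d-m) := by
    rw [Finset.card_image_of_injective _ ρ.injective, hUcard]
  -- V sits inside the fibers over the biUnion of tops
  have hsub : (s.biUnion (fun x => Dset d m A x.1)).image ρ ⊆
      (s.biUnion (fun x => (Dset d m A x.1).image (fun c => top d m hm (ρ c)))).biUnion
        (fun tt => Fib d m tt) := by
    intro y hy
    obtain ⟨c, hc, rfl⟩ := Finset.mem_image.1 hy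
    obtain ⟨x, hx, hcx⟩ := Finset.mem_biUnion.1 hc
    refine Finset.mem_biUnion.2 ⟨top d m hm (ρ c), ?_, mem_Fib_top hm _⟩
    exact Finset.mem_biUnion.2 ⟨x, hx, Finset.mem_image_of_mem _ hcx⟩
  have hbound : ((s.biUnion (fun x => (Dset d m A x.1).image (fun c => top d m hm (ρ c)))).biUnion
        (fun tt => Fib d m tt)).card ≤
      (s.biUnion (fun x => (Dset d m A x.1).image (fun c => top d m hm (ρ c)))).card * 2^(d-m) := by
    refine le_trans (Finset.card_biUnion_le) ?_
    rw [Finset.sum_congr rfl (fun tt _ => card_Fib hm tt), Finset.sum_const, smul_eq_mul]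
  have := Finset.card_le_card hsub
  have hfinal : s.card * 2^(d-m) ≤
      (s.biUnion (fun x => (Dset d m A x.1).image (fun c => top d m hm (ρ c)))).card * 2^(d-m) := by
    omega
  exact Nat.le_of_mul_le_mul_right hfinal hpow

end PBmain

namespace PBmain
open PBaux PBaux2 PBaux3 Finset

/-- label along a butterfly path: coordinates `< i` already switched to `lo`. -/
def mix {d : ℕ} (i : ℕ) (lo hi : Fin d → Bool) : Fin d → Bool :=
  fun j => if (j:ℕ) < i then lo j else hi j

end PBmain


/-- Every pair of `d`-dimensional butterflies is a `2^m`-concentrator (`0 ≤ m ≤ d`):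
for any set `A` of input (layer-`0`) nodes and any set `B` of output (layer-`2d`) nodes
with `|A| = |B| = 2^m`, there is a family of directed paths, one per element of `A`,
pairwise vertex-disjoint (vertices on different layers are automatically distinct, so
disjointness is stated layerwise), starting exactly at the elements of `A` and ending
exactly at the elements of `B`. -/
theorem pair_of_butterflies_pow_two_concentrator
    (d : ℕ) (hd : 1 ≤ d) (m : ℕ) (hm : m ≤ d)
    (ρ : (Fin d → Bool) ≃ (Fin d → Bool))
    (A B : Finset (Fin d → Bool)) (hA : A.card = 2 ^ m) (hB : B.card = 2 ^ m) :
    ∃ P : (Fin d → Bool) → ℕ → (Fin d → Bool),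
      (∀ a ∈ A, P a 0 = a) ∧
      (∀ a ∈ A, ∀ i, i < 2 * d → pairStep d ρ i (P a i) (P a (i + 1))) ∧
      (∀ a ∈ A, ∀ a' ∈ A, a ≠ a' → ∀ i, i ≤ 2 * d → P a i ≠ P a' i) ∧
      A.image (fun a => P a (2 * d)) = B := by
  classical
  obtain ⟨f, hfinj, hfmem⟩ := PBmain.hall_exists hm ρ hA
  have hchoice : ∀ x : {x // x ∈ A}, ∃ c, c ∈ PBmain.Dset d m A x.1 ∧
      PBmain.top d m hm (ρ c) = f x := by
    intro x
    obtain ⟨c, hc, hct⟩ := Finset.mem_image.1 (hfmem x)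
    exact ⟨c, hc, hct⟩
  choose C hCD hCtop using hchoice
  -- the `B`-rank selector
  have hs_lt : ∀ x : {x // x ∈ A}, PBmain.key2 (f x) < 2^m := fun x => PBmain.key2_lt _
  have hs_inj : ∀ x y : {x // x ∈ A}, PBmain.key2 (f x) = PBmain.key2 (f y) → x = y :=
    fun x y h => hfinj (PBmain.key2_inj h)
  have hbex : ∀ x : {x // x ∈ A}, ∃ b, b ∈ B ∧
      PBaux2.rk B PBmain.key2 b = PBmain.key2 (f x) := by
    intro x
    obtain ⟨b, hb, hrb⟩ := PBaux2.rk_surj B PBmain.key2 PBmain.key2_inj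
      (t := PBmain.key2 (f x)) (by rw [hB]; exact hs_lt x)
    exact ⟨b, hb, hrb⟩
  choose bb hbbB hbbrk using hbex
  refine ⟨fun a i => if ha : a ∈ A then
      (if i ≤ d then PBmain.mix i (C ⟨a, ha⟩) a
       else PBmain.mix (i - d) (bb ⟨a, ha⟩) (ρ (C ⟨a, ha⟩))) else a, ?_, ?_, ?_, ?_⟩
  · -- start points
    intro a ha
    simp only [dif_pos ha, if_pos (Nat.zero_le d)]
    funext j
    simp [PBmain.mix]
  · -- edges
    intro a ha i hi2d
    by_cases h1 : i < d
    · unfold pairStep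
      rw [dif_pos h1]
      intro k hk
      have hkv : (k:ℕ) ≠ i := fun h => hk (Fin.ext h)
      simp only [dif_pos ha, if_pos (le_of_lt h1), if_pos (Nat.succ_le_of_lt h1),
        PBmain.mix]
      by_cases hlt : (k:ℕ) < i
      · rw [if_pos hlt, if_pos (by omega)]
      · rw [if_neg hlt, if_neg (by omega)]
    · by_cases h2 : i = d
      · unfold pairStep
        rw [dif_neg (by omega : ¬ i < d), dif_pos (by omega : i < 2*d), if_pos h2]
        intro k hk
        have hkv : (k:ℕ) ≠ i - d := fun h => hk (Fin.ext (by simpa using h))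
        have hPd : (if i ≤ d then PBmain.mix i (C ⟨a, ha⟩) a
            else PBmain.mix (i - d) (bb ⟨a, ha⟩) (ρ (C ⟨a, ha⟩))) = C ⟨a, ha⟩ := by
          rw [if_pos (by omega : i ≤ d)]
          funext j
          have := j.2
          simp only [PBmain.mix]
          rw [if_pos (by omega : (j:ℕ) < i)]
        simp only [dif_pos ha, hPd, if_neg (by omega : ¬ i + 1 ≤ d), PBmain.mix]
        rw [if_neg (by omega : ¬ (k:ℕ) < i + 1 - d)]
      · have h3 : d < i := by omega
        unfold pairStep
        rw [dif_neg (by omega), dif_pos hi2d, if_neg h2]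
        intro k hk
        have hkv : (k:ℕ) ≠ i - d := fun h => hk (Fin.ext (by simpa using h))
        simp only [dif_pos ha, if_neg (by omega : ¬ i ≤ d),
          if_neg (by omega : ¬ i + 1 ≤ d), PBmain.mix]
        by_cases hlt : (k:ℕ) < i - d
        · rw [if_pos hlt, if_pos (by omega)]
        · rw [if_neg hlt, if_neg (by omega)]
  · -- layerwise disjointness
    intro a ha a' ha' hne i hi heq
    have hxne : (⟨a, ha⟩ : {x // x ∈ A}) ≠ ⟨a', ha'⟩ :=
      fun h => hne (congrArg Subtype.val h)
    by_cases hid : i ≤ d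
    · -- left butterfly layers
      simp only [dif_pos ha, dif_pos ha', if_pos hid] at heq
      have H1 : ∀ j : Fin d, (j:ℕ) < i → C ⟨a, ha⟩ j = C ⟨a', ha'⟩ j := by
        intro j hj
        have := congrFun heq j
        simpa [PBmain.mix, hj] using this
      have H2 : ∀ j : Fin d, i ≤ (j:ℕ) → a j = a' j := by
        intro j hj
        have := congrFun heq j
        simpa [PBmain.mix, Nat.not_lt.2 hj] using this
      have hclose := PBaux.key_close (c := a) (c' := a') (i := i) H2
      by_cases him : i ≤ m
      · have hbit : ∀ j < i, (PBaux2.rk A PBaux.key a).testBit j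
            = (PBaux2.rk A PBaux.key a').testBit j := by
          intro j hj
          have hjd : j < d := by omega
          have hD := hCD ⟨a, ha⟩
          have hD' := hCD ⟨a', ha'⟩
          rw [PBmain.Dset, Finset.mem_filter] at hD hD'
          have e1 := hD.2 ⟨j, hjd⟩ (by simpa using (by omega : j < m))
          have e2 := hD'.2 ⟨j, hjd⟩ (by simpa using (by omega : j < m))
          rw [PBmain.rA] at e1 e2
          rw [← e1, ← e2]
          exact H1 ⟨j, hjd⟩ (show j < i from hj)
        have hmod := PBaux.mod_two_pow_eq_of_testBit (i := i) hbit
        exact PBaux2.rk_mod_ne A PBaux.key PBaux.key_inj ha ha' hne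
          (Nat.pow_pos (by norm_num)) hclose.1 hclose.2 hmod
      · have hbit : ∀ j < m, (PBaux2.rk A PBaux.key a).testBit j
            = (PBaux2.rk A PBaux.key a').testBit j := by
          intro j hj
          have hjd : j < d := by omega
          have hD := hCD ⟨a, ha⟩
          have hD' := hCD ⟨a', ha'⟩
          rw [PBmain.Dset, Finset.mem_filter] at hD hD'
          have e1 := hD.2 ⟨j, hjd⟩ (by simpa using hj)
          have e2 := hD'.2 ⟨j, hjd⟩ (by simpa using hj)
          rw [PBmain.rA] at e1 e2
          rw [← e1, ← e2]
          exact H1 ⟨j, hjd⟩ (show j < i by omega)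
        have hlt : PBaux2.rk A PBaux.key a < 2^m := by
          have := PBaux2.rk_lt_card A PBaux.key ha; rwa [hA] at this
        have hlt' : PBaux2.rk A PBaux.key a' < 2^m := by
          have := PBaux2.rk_lt_card A PBaux.key ha'; rwa [hA] at this
        exact PBaux2.rk_inj_on A PBaux.key PBaux.key_inj ha ha' hne
          (PBaux.eq_of_testBit_lt hlt hlt' hbit)
    · -- right butterfly layers
      simp only [dif_pos ha, dif_pos ha', if_neg hid] at heq
      have H1 : ∀ j : Fin d, (j:ℕ) < i - d → bb ⟨a, ha⟩ j = bb ⟨a', ha'⟩ j := by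
        intro j hj
        have := congrFun heq j
        simpa [PBmain.mix, hj] using this
      have H2 : ∀ j : Fin d, i - d ≤ (j:ℕ) → ρ (C ⟨a, ha⟩) j = ρ (C ⟨a', ha'⟩) j := by
        intro j hj
        have := congrFun heq j
        simpa [PBmain.mix, Nat.not_lt.2 hj] using this
      by_cases hcase : i - d ≤ d - m
      · have hf : f ⟨a, ha⟩ = f ⟨a', ha'⟩ := by
          rw [← hCtop ⟨a, ha⟩, ← hCtop ⟨a', ha'⟩]
          funext k
          exact H2 _ (by have := k.2; simp only; omega)
        exact hxne (hfinj hf)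
      · have hbne : bb ⟨a, ha⟩ ≠ bb ⟨a', ha'⟩ := by
          intro h
          exact hxne (hs_inj _ _ (by rw [← hbbrk ⟨a, ha⟩, ← hbbrk ⟨a', ha'⟩, h]))
        have hclose := PBmain.key2_close (n := d) (i := i - d) (by omega) H1
        have hmodne := PBaux2.rk_mod_ne B PBmain.key2 PBmain.key2_inj
          (hbbB ⟨a, ha⟩) (hbbB ⟨a', ha'⟩) hbne
          (Nat.pow_pos (by norm_num)) hclose.1 hclose.2
        rw [hbbrk ⟨a, ha⟩, hbbrk ⟨a', ha'⟩] at hmodne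
        have hfagree : ∀ k : Fin m, (i - d) - (d - m) ≤ (k:ℕ) →
            f ⟨a, ha⟩ k = f ⟨a', ha'⟩ k := by
          intro k hk
          rw [← hCtop ⟨a, ha⟩, ← hCtop ⟨a', ha'⟩]
          exact H2 _ (by have := k.2; simp only; omega)
        have hmodeq := PBmain.key2_mod (n := m) (i := (i - d) - (d - m)) hfagree
        have hexp : m - ((i - d) - (d - m)) = d - (i - d) := by omega
        rw [hexp] at hmodeq
        exact hmodne hmodeq
  · -- the ends are exactly `B`
    have hP2d : ∀ (a : Fin d → Bool) (ha : a ∈ A),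
        (if ha' : a ∈ A then
          (if 2*d ≤ d then PBmain.mix (2*d) (C ⟨a, ha'⟩) a
           else PBmain.mix (2*d - d) (bb ⟨a, ha'⟩) (ρ (C ⟨a, ha'⟩))) else a)
          = bb ⟨a, ha⟩ := by
      intro a ha
      rw [dif_pos ha, if_neg (by omega : ¬ 2*d ≤ d)]
      funext j
      have := j.2
      simp only [PBmain.mix]
      rw [if_pos (by omega : (j:ℕ) < 2*d - d)]
    refine Finset.eq_of_subset_of_card_le ?_ ?_
    · intro b hb
      obtain ⟨a, ha, rfl⟩ := Finset.mem_image.1 hb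
      show (if ha' : a ∈ A then
          (if 2*d ≤ d then PBmain.mix (2*d) (C ⟨a, ha'⟩) a
           else PBmain.mix (2*d - d) (bb ⟨a, ha'⟩) (ρ (C ⟨a, ha'⟩))) else a) ∈ B
      rw [hP2d a ha]
      exact hbbB _
    · have hinjon : Set.InjOn (fun a => if ha : a ∈ A then
          (if 2*d ≤ d then PBmain.mix (2*d) (C ⟨a, ha⟩) a
           else PBmain.mix (2*d - d) (bb ⟨a, ha⟩) (ρ (C ⟨a, ha⟩))) else a) ↑A := by
        intro x hx y hy hxy
        simp only [Finset.mem_coe] at hx hy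
        have hxy2 : (if ha' : x ∈ A then
            (if 2*d ≤ d then PBmain.mix (2*d) (C ⟨x, ha'⟩) x
             else PBmain.mix (2*d - d) (bb ⟨x, ha'⟩) (ρ (C ⟨x, ha'⟩))) else x)
            = (if ha' : y ∈ A then
            (if 2*d ≤ d then PBmain.mix (2*d) (C ⟨y, ha'⟩) y
             else PBmain.mix (2*d - d) (bb ⟨y, ha'⟩) (ρ (C ⟨y, ha'⟩))) else y) := hxy
        rw [hP2d x hx, hP2d y hy] at hxy2
        rename' hxy2 => hxy
        have : (⟨x, hx⟩ : {z // z ∈ A}) = ⟨y, hy⟩ :=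
          hs_inj _ _ (by rw [← hbbrk ⟨x, hx⟩, ← hbbrk ⟨y, hy⟩, hxy])
        exact congrArg Subtype.val this
      rw [Finset.card_image_of_injOn hinjon, hA, hB]
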